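/- (Duality; τ-invariance in Theorem 4.1.) For every admissible sequence s = (k₁,…,k_l), ζ(s) = ζ(τ(s)), where τ(s) is the dual sequence of s. -/

import Mathlib

/-- The multiple zeta value `ζ(k₁,…,k_l) = ∑_{n₁>n₂>⋯>n_l≥1} 1/(n₁^{k₁} ⋯ n_l^{k_l})`. -/
noncomputable def mzv (k : List ℕ) : ℝ :=
  ∑' n : Fin k.length → ℕ,
    if (∀ i j : Fin k.length, i < j → n j < n i) ∧ (∀ i, 1 ≤ n i) then
      ∏ i : Fin k.length, ((n i : ℝ) ^ k.get i)⁻¹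
    else 0

/-- Partial sums Σ(s) = (k₁, k₁+k₂, …, k₁+⋯+k_l). -/
def partialSums (k : List ℕ) : List ℕ :=
  (List.range k.length).map fun i => (k.take (i + 1)).sum

/-- Inverse of `partialSums`: the sequence of successive differences. -/
def unPartial (a : List ℕ) : List ℕ :=
  List.zipWith (· - ·) a (0 :: a)

/-- The dual sequence τ(s) = Σ⁻¹(C_n(R_n(Σ(s)))) of an admissible sequence `s` of weight `n`,
where `R_n(a₁,…,a_i) = (n+1-a_i,…,n+1-a₁)` and `C_n` takes the complement in `{1,…,n}`
in increasing order. -/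
def dualSeq (k : List ℕ) : List ℕ :=
  let n := k.sum
  let r := (partialSums k).reverse.map fun a => n + 1 - a
  let c := ((List.range n).map (· + 1)).filter fun m => m ∉ r
  unPartial c

/- ----------------------------------------------------------------------
   Auxiliary development: the Seki–Yamamoto connected-sum proof of duality.
   All analysis happens in `ℝ≥0∞`.
   ---------------------------------------------------------------------- -/

open scoped ENNReal

namespace MzvDuality
noncomputable section

/-- weight factor `1/m^k` in `ℝ≥0∞`. -/
def w (m k : ℕ) : ℝ≥0∞ := ((m : ℝ≥0∞) ^ k)⁻¹

/-- nested sum over strictly decreasing tuples with entries in `[1, M)`. -/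
def F : List ℕ → ℕ → ℝ≥0∞
  | [], _ => 1
  | k :: t, M => ∑' b : ℕ, if 1 ≤ b ∧ b < M then w b k * F t b else 0

/-- the multiple zeta value as a nested sum in `ℝ≥0∞`. -/
def zE : List ℕ → ℝ≥0∞
  | [] => 1
  | k :: t => ∑' m : ℕ, if 1 ≤ m then w m k * F t m else 0

def mzvB (k : List ℕ) (M : ℕ) : ℝ≥0∞ :=
  ∑' n : Fin k.length → ℕ,
    if ((∀ i j, i < j → n j < n i) ∧ (∀ i, 1 ≤ n i)) ∧ (∀ i, n i < M) then
      ∏ i, w (n i) (k.get i) else 0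

def mzvE (k : List ℕ) : ℝ≥0∞ :=
  ∑' n : Fin k.length → ℕ,
    if (∀ i j, i < j → n j < n i) ∧ (∀ i, 1 ≤ n i) then
      ∏ i, w (n i) (k.get i) else 0

lemma forall_cons_iff {l : ℕ} (P : ℕ → Prop) (m : ℕ) (v : Fin l → ℕ) :
    (∀ i, P ((Fin.cons m v : Fin (l+1) → ℕ) i)) ↔ P m ∧ ∀ i, P (v i) := by
  rw [Fin.forall_fin_succ]; simp

lemma dec_cons_iff {l : ℕ} (m : ℕ) (v : Fin l → ℕ) :
    (∀ i j : Fin (l+1), i < j →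
        (Fin.cons m v : Fin (l+1) → ℕ) j < (Fin.cons m v : Fin (l+1) → ℕ) i) ↔
      ((∀ i j : Fin l, i < j → v j < v i) ∧ ∀ i, v i < m) := by
  constructor
  · intro h
    refine ⟨fun i j hij => ?_, fun i => ?_⟩
    · simpa [Fin.cons_succ] using h i.succ j.succ (by simpa using hij)
    · simpa using h 0 i.succ i.succ_pos
  · rintro ⟨hd, hb⟩ i j hij
    induction j using Fin.cases with
    | zero => exact absurd hij (Fin.not_lt_zero i)
    | succ j =>
      induction i using Fin.cases with
      | zero => simpa using hb j
      | succ i => simpa [Fin.cons_succ] using hd i j (by simpa using hij)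

lemma tsum_pi_succ {l : ℕ} (f : (Fin (l+1) → ℕ) → ℝ≥0∞) :
    ∑' n, f n = ∑' (m : ℕ), ∑' (v : Fin l → ℕ), f (Fin.cons m v) := by
  rw [← (Fin.consEquiv (fun _ : Fin (l+1) => ℕ)).tsum_eq f]
  exact ENNReal.tsum_prod (f := fun m v => f (Fin.cons m v))

lemma tsum_ite_mul {α : Type*} (P : Prop) [Decidable P] (x : ℝ≥0∞) (f : α → ℝ≥0∞) :
    ∑' v, (if P then x * f v else 0) = if P then x * ∑' v, f v else 0 := by
  split <;> simp [ENNReal.tsum_mul_left]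

lemma tsum_ite {α : Type*} (P : Prop) [Decidable P] (f : α → ℝ≥0∞) :
    ∑' v : α, (if P then f v else 0) = if P then ∑' v, f v else 0 := by
  split <;> simp

lemma tsum_ite_mulr {α : Type*} (P : α → Prop) [DecidablePred P] (f : α → ℝ≥0∞) (c : ℝ≥0∞) :
    ∑' n, (if P n then f n * c else 0) = (∑' n, if P n then f n else 0) * c := by
  rw [← ENNReal.tsum_mul_right]; exact tsum_congr fun n => by split <;> simp

lemma prod_w_cons (k : ℕ) (t : List ℕ) (m : ℕ) (v : Fin t.length → ℕ) :
    (∏ i : Fin (t.length+1), w ((Fin.cons m v : Fin (t.length+1) → ℕ) i) ((k::t).get i)) =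
      w m k * ∏ i, w (v i) (t.get i) := by
  rw [Fin.prod_univ_succ]
  simp [Fin.cons_succ]

lemma F_eq (k : List ℕ) (M : ℕ) : F k M = mzvB k M := by
  induction k generalizing M with
  | nil =>
      rw [mzvB, tsum_eq_single (fun i => i.elim0)
        (fun b hb => (hb (funext fun i => i.elim0)).elim)]
      simp [F]
  | cons k t ih =>
      rw [mzvB]
      simp only [List.length_cons]
      rw [tsum_pi_succ]
      rw [show F (k :: t) M = ∑' m : ℕ, if 1 ≤ m ∧ m < M then w m k * F t m else 0 from rfl]
      refine tsum_congr fun m => ?_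
      have hpt : ∀ v : Fin t.length → ℕ,
          (if ((∀ i j, i < j → (Fin.cons m v : Fin (t.length+1) → ℕ) j <
                (Fin.cons m v : Fin (t.length+1) → ℕ) i) ∧
              (∀ i, 1 ≤ (Fin.cons m v : Fin (t.length+1) → ℕ) i)) ∧
              (∀ i, (Fin.cons m v : Fin (t.length+1) → ℕ) i < M) then
            ∏ i, w ((Fin.cons m v : Fin (t.length+1) → ℕ) i) ((k::t).get i) else 0) =
          if 1 ≤ m ∧ m < M then w m k *
            (if ((∀ i j, i < j → v j < v i) ∧ (∀ i, 1 ≤ v i)) ∧ (∀ i, v i < m) then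
              ∏ i, w (v i) (t.get i) else 0) else 0 := by
        intro v
        rw [if_congr (show _ ↔ (1 ≤ m ∧ m < M) ∧
            (((∀ i j, i < j → v j < v i) ∧ (∀ i, 1 ≤ v i)) ∧ (∀ i, v i < m)) by
          rw [dec_cons_iff, forall_cons_iff (1 ≤ ·), forall_cons_iff (· < M)]
          constructor
          · rintro ⟨⟨⟨hd, hvm⟩, hm, hv⟩, hM, _⟩
            exact ⟨⟨hm, hM⟩, ⟨hd, hv⟩, hvm⟩
          · rintro ⟨⟨hm, hM⟩, ⟨hd, hv⟩, hvm⟩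
            exact ⟨⟨⟨hd, hvm⟩, hm, hv⟩, hM, fun i => lt_trans (hvm i) hM⟩) rfl rfl]
        by_cases h1 : 1 ≤ m ∧ m < M
        · by_cases h2 : ((∀ i j, i < j → v j < v i) ∧ (∀ i, 1 ≤ v i)) ∧ (∀ i, v i < m)
          · rw [if_pos ⟨h1, h2⟩, if_pos h1, if_pos h2, prod_w_cons]
          · rw [if_neg (by tauto), if_pos h1, if_neg h2, mul_zero]
        · rw [if_neg (by tauto), if_neg h1]
      rw [tsum_congr hpt, tsum_ite_mul, ih, mzvB]

lemma zE_eq (k : List ℕ) : zE k = mzvE k := by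
  cases k with
  | nil =>
      rw [mzvE, tsum_eq_single (fun i => i.elim0)
        (fun b hb => (hb (funext fun i => i.elim0)).elim)]
      simp [zE]
  | cons k t =>
      rw [mzvE]
      simp only [List.length_cons]
      rw [tsum_pi_succ]
      rw [show zE (k :: t) = ∑' m : ℕ, if 1 ≤ m then w m k * F t m else 0 from rfl]
      refine tsum_congr fun m => ?_
      have hpt : ∀ v : Fin t.length → ℕ,
          (if (∀ i j, i < j → (Fin.cons m v : Fin (t.length+1) → ℕ) j <
                (Fin.cons m v : Fin (t.length+1) → ℕ) i) ∧
              (∀ i, 1 ≤ (Fin.cons m v : Fin (t.length+1) → ℕ) i) then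
            ∏ i, w ((Fin.cons m v : Fin (t.length+1) → ℕ) i) ((k::t).get i) else 0) =
          if 1 ≤ m then w m k *
            (if ((∀ i j, i < j → v j < v i) ∧ (∀ i, 1 ≤ v i)) ∧ (∀ i, v i < m) then
              ∏ i, w (v i) (t.get i) else 0) else 0 := by
        intro v
        rw [if_congr (show _ ↔ (1 ≤ m) ∧
            (((∀ i j, i < j → v j < v i) ∧ (∀ i, 1 ≤ v i)) ∧ (∀ i, v i < m)) by
          rw [dec_cons_iff, forall_cons_iff (1 ≤ ·)]
          constructor
          · rintro ⟨⟨hd, hvm⟩, hm, hv⟩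
            exact ⟨hm, ⟨hd, hv⟩, hvm⟩
          · rintro ⟨hm, ⟨hd, hv⟩, hvm⟩
            exact ⟨⟨hd, hvm⟩, hm, hv⟩) rfl rfl]
        by_cases h1 : 1 ≤ m
        · by_cases h2 : ((∀ i j, i < j → v j < v i) ∧ (∀ i, 1 ≤ v i)) ∧ (∀ i, v i < m)
          · rw [if_pos ⟨h1, h2⟩, if_pos h1, if_pos h2, prod_w_cons]
          · rw [if_neg (by tauto), if_pos h1, if_neg h2, mul_zero]
        · rw [if_neg (by tauto), if_neg h1]
      rw [tsum_congr hpt, tsum_ite_mul, F_eq, mzvB]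

lemma mzv_eq (k : List ℕ) : mzv k = (mzvE k).toReal := by
  rw [mzv, mzvE, ENNReal.tsum_toReal_eq]
  · refine tsum_congr fun n => ?_
    split
    · rw [ENNReal.toReal_prod]
      refine Finset.prod_congr rfl fun i _ => ?_
      rw [w, ENNReal.toReal_inv, ENNReal.toReal_pow, ENNReal.toReal_natCast]
    · simp
  · intro n
    split
    · rename_i hc
      refine ENNReal.prod_ne_top fun i _ => ?_
      rw [w]
      exact ENNReal.inv_ne_top.mpr
        (pow_ne_zero _ (Nat.cast_ne_zero.mpr (by have := hc.2 i; omega)))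
    · simp

/-- the connector `m! n! / (m+n)! = 1 / (m+n).choose m`. -/
def cn (m n : ℕ) : ℝ≥0∞ := (((m+n).choose m : ℕ) : ℝ≥0∞)⁻¹

lemma choose_ne (m n : ℕ) : (m+n).choose m ≠ 0 :=
  (Nat.choose_pos (Nat.le_add_right m n)).ne'

lemma cn_ne_top (m n : ℕ) : cn m n ≠ ∞ := by
  simpa [cn, ENNReal.inv_ne_top] using choose_ne m n

lemma cn_symm (m n : ℕ) : cn m n = cn n m := by
  rw [cn, cn, add_comm n m]
  congr 2
  rw [← Nat.choose_symm (Nat.le_add_right m n)]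
  simp

lemma cn_zero (m : ℕ) : cn m 0 = 1 := by simp [cn]

lemma choose_step (m b : ℕ) : (m+b+1) * (m+b).choose m = (b+1) * ((m+b+1).choose m) := by
  have h1 : (m+b).choose m = (m+b).choose b := by
    rw [← Nat.choose_symm (Nat.le_add_right m b)]; simp
  have h2 : (m+b+1).choose m = (m+b+1).choose (b+1) := by
    rw [← Nat.choose_symm (by omega : m ≤ m+b+1)]
    congr 1; omega
  rw [h1, h2]
  have := Nat.add_one_mul_choose_eq (m+b) b
  rw [this, Nat.mul_comm]

lemma step (m b : ℕ) (hm : 1 ≤ m) :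
    cn m b * (m : ℝ≥0∞)⁻¹ =
      cn m (b+1) * ((b+1 : ℕ) : ℝ≥0∞)⁻¹ + cn m (b+1) * (m : ℝ≥0∞)⁻¹ := by
  have hcn : cn m (b+1) = ((((m+b+1).choose m : ℕ)) : ℝ≥0∞)⁻¹ := rfl
  rw [hcn]
  have hm0 : (m : ℝ) ≠ 0 := Nat.cast_ne_zero.mpr (by omega)
  have hA : ((m+b).choose m : ℝ) ≠ 0 := Nat.cast_ne_zero.mpr (choose_ne m b)
  have hB : ((m+b+1).choose m : ℝ) ≠ 0 := Nat.cast_ne_zero.mpr (choose_ne m (b+1))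
  have hb1 : ((b+1 : ℕ) : ℝ) ≠ 0 := Nat.cast_ne_zero.mpr (by omega)
  have hmE : ((m : ℝ≥0∞))⁻¹ ≠ ∞ := by
    simpa [ENNReal.inv_ne_top] using (show m ≠ 0 by omega)
  have hbE : (((b+1 : ℕ) : ℝ≥0∞))⁻¹ ≠ ∞ := by
    simpa [ENNReal.inv_ne_top] using Nat.cast_ne_zero.mpr (show b+1 ≠ 0 by omega)
  rw [← ENNReal.toReal_eq_toReal_iff' (by
        exact ENNReal.mul_ne_top (cn_ne_top m b) hmE)
      (by
        exact ENNReal.add_ne_top.mpr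
          ⟨ENNReal.mul_ne_top (cn_ne_top m (b+1)) hbE,
           ENNReal.mul_ne_top (cn_ne_top m (b+1)) hmE⟩)]
  rw [ENNReal.toReal_add (by exact ENNReal.mul_ne_top (cn_ne_top m (b+1)) hbE)
      (by exact ENNReal.mul_ne_top (cn_ne_top m (b+1)) hmE)]
  simp only [ENNReal.toReal_mul, cn, ENNReal.toReal_inv, ENNReal.toReal_natCast]
  have hstep : ((m+b+1 : ℕ) : ℝ) * ((m+b).choose m : ℕ) =
      ((b+1 : ℕ) : ℝ) * ((m+b+1).choose m : ℕ) := by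
    have := choose_step m b
    push_cast
    push_cast at this ⊢
    exact_mod_cast congrArg (fun x : ℕ => (x : ℝ)) this
  push_cast at hstep ⊢
  field_simp
  linear_combination -hstep

lemma key (m n : ℕ) (hm : 1 ≤ m) :
    ∑' b : ℕ, (if n < b then cn m b * ((b : ℕ) : ℝ≥0∞)⁻¹ else 0) = cn m n * (m : ℝ≥0∞)⁻¹ := by
  set f : ℕ → ℝ≥0∞ := fun b => if n < b then cn m b * ((b : ℕ) : ℝ≥0∞)⁻¹ else 0 with hf
  set g : ℕ → ℝ≥0∞ := fun b => cn m b * (m : ℝ≥0∞)⁻¹ with hg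
  have hmE : (m : ℝ≥0∞)⁻¹ ≠ ∞ := by
    simpa [ENNReal.inv_ne_top] using (show m ≠ 0 by omega)
  have hgt : ∀ b, g b ≠ ∞ := fun b => ENNReal.mul_ne_top (cn_ne_top m b) hmE
  have hS : ∀ j : ℕ, (∑ i ∈ Finset.range (n+1+j), f i) + g (n+j) = g n := by
    intro j
    induction j with
    | zero =>
        have h0 : ∑ i ∈ Finset.range (n+1), f i = 0 := by
          refine Finset.sum_eq_zero fun i hi => ?_
          have : ¬ n < i := by simp at hi; omega
          simp [hf, this]
        simpa [h0]
    | succ j ih =>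
        have h1 : n+1+(j+1) = (n+1+j)+1 := by omega
        have e2 : n+(j+1) = (n+j)+1 := by omega
        rw [h1, Finset.sum_range_succ, e2]
        have hfe : f (n+1+j) = cn m (n+j+1) * (((n+j+1 : ℕ)) : ℝ≥0∞)⁻¹ := by
          have e : n+1+j = n+j+1 := by omega
          simp only [hf]
          rw [e, if_pos (by omega : n < n+j+1)]
        rw [hfe, add_assoc]
        have hgeq : g (n+j+1) = cn m (n+j+1) * (m : ℝ≥0∞)⁻¹ := rfl
        rw [hgeq, ← step m (n+j) hm]
        exact ih
  have hgle : ∀ b, g b ≤ ((b : ℕ) : ℝ≥0∞)⁻¹ := by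
    intro b
    have h1 : (b : ℕ) ≤ (m+b).choose m := by
      calc b ≤ b+1 := by omega
        _ = (b+1).choose b := (Nat.choose_succ_self_right b).symm
        _ ≤ (m+b).choose b := Nat.choose_le_choose b (by omega)
        _ = (m+b).choose m := by
            rw [← Nat.choose_symm (Nat.le_add_left b m)]
            congr 1
            omega
    calc g b = cn m b * (m:ℝ≥0∞)⁻¹ := rfl
      _ ≤ cn m b * 1 := by gcongr; exact ENNReal.inv_le_one.mpr (by exact_mod_cast hm)
      _ = cn m b := mul_one _
      _ ≤ ((b:ℕ) : ℝ≥0∞)⁻¹ := by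
          rw [cn]
          exact ENNReal.inv_le_inv' (by exact_mod_cast h1)
  have hg0 : Filter.Tendsto g Filter.atTop (nhds 0) :=
    tendsto_of_tendsto_of_tendsto_of_le_of_le tendsto_const_nhds
      ENNReal.tendsto_inv_nat_nhds_zero (fun b => zero_le) hgle
  have hmono : Filter.Tendsto (fun j : ℕ => n + j) Filter.atTop Filter.atTop := by
    apply Filter.tendsto_atTop_mono (fun j => Nat.le_add_left j n) Filter.tendsto_id
  have hshift : Filter.Tendsto (fun j : ℕ => g (n+j)) Filter.atTop (nhds 0) := hg0.comp hmono
  have hmono2 : Filter.Tendsto (fun j : ℕ => n + 1 + j) Filter.atTop Filter.atTop := by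
    apply Filter.tendsto_atTop_mono (fun j => Nat.le_add_left j (n+1)) Filter.tendsto_id
  have h2 : Filter.Tendsto (fun j => ∑ i ∈ Finset.range (n+1+j), f i) Filter.atTop
      (nhds (∑' b, f b)) := (ENNReal.tendsto_nat_tsum f).comp hmono2
  have h3 : Filter.Tendsto (fun j => ∑ i ∈ Finset.range (n+1+j), f i) Filter.atTop
      (nhds (g n)) := by
    have heq : (fun j => ∑ i ∈ Finset.range (n+1+j), f i) = fun j => g n - g (n+j) := by
      funext j
      exact ENNReal.eq_sub_of_add_eq (hgt _) (hS j)
    rw [heq]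
    have := ((ENNReal.continuous_sub_left (hgt n)).tendsto 0).comp hshift
    simpa [Function.comp_def] using this
  exact tendsto_nhds_unique h2 h3

lemma w_one (n : ℕ) : w n 1 = ((n:ℕ) : ℝ≥0∞)⁻¹ := by rw [w, pow_one]

lemma w_succ (m k : ℕ) (hm : m ≠ 0) : w m (k+1) = w m k * ((m:ℕ) : ℝ≥0∞)⁻¹ := by
  rw [w, pow_succ, ENNReal.mul_inv (Or.inl (pow_ne_zero _ (Nat.cast_ne_zero.mpr hm)))
    (Or.inr (Nat.cast_ne_zero.mpr hm)), w]

/-- the connected sum of Seki–Yamamoto. -/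
def Z : List ℕ → List ℕ → ℝ≥0∞
  | [], l => zE l
  | k :: kt, [] => zE (k :: kt)
  | k :: kt, l :: lt =>
      ∑' m : ℕ, ∑' n : ℕ, if 1 ≤ m ∧ 1 ≤ n then
        cn m n * (w m k * F kt m) * (w n l * F lt n) else 0

/-- the transport relation. -/
lemma T1 (k : ℕ) (kt l : List ℕ) : Z ((k+1)::kt) l = Z (k::kt) (1::l) := by
  cases l with
  | nil =>
      rw [show Z ((k+1)::kt) [] = zE ((k+1)::kt) from rfl]
      rw [show Z (k::kt) [1] = ∑' m : ℕ, ∑' n : ℕ, (if 1 ≤ m ∧ 1 ≤ n then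
        cn m n * (w m k * F kt m) * (w n 1 * F [] n) else 0) from rfl]
      rw [show zE ((k+1)::kt) = ∑' m : ℕ, (if 1 ≤ m then w m (k+1) * F kt m else 0) from rfl]
      refine tsum_congr fun m => ?_
      by_cases hm : 1 ≤ m
      · have e1 : ∀ n : ℕ, (if 1 ≤ m ∧ 1 ≤ n then
            cn m n * (w m k * F kt m) * (w n 1 * F [] n) else 0) =
            (if 0 < n then cn m n * ((n:ℕ) : ℝ≥0∞)⁻¹ else 0) * (w m k * F kt m) := by
          intro n
          by_cases hn : 1 ≤ n
          · rw [if_pos ⟨hm, hn⟩, if_pos (show 0 < n from hn), show F [] n = 1 from rfl, w_one]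
            ring
          · rw [if_neg (by tauto), if_neg (by omega), zero_mul]
        rw [tsum_congr e1, ENNReal.tsum_mul_right, key m 0 hm, if_pos hm, cn_zero,
          w_succ m k (by omega)]
        ring
      · simp [hm]
  | cons l₁ lt =>
      rw [show Z ((k+1)::kt) (l₁::lt) = ∑' m : ℕ, ∑' n : ℕ, (if 1 ≤ m ∧ 1 ≤ n then
        cn m n * (w m (k+1) * F kt m) * (w n l₁ * F lt n) else 0) from rfl]
      rw [show Z (k::kt) (1::l₁::lt) = ∑' m : ℕ, ∑' n : ℕ, (if 1 ≤ m ∧ 1 ≤ n then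
        cn m n * (w m k * F kt m) * (w n 1 * F (l₁::lt) n) else 0) from rfl]
      refine (tsum_congr fun m => ?_).symm
      by_cases hm : 1 ≤ m
      · have e1 : ∀ n0 : ℕ, (if 1 ≤ m ∧ 1 ≤ n0 then
            cn m n0 * (w m k * F kt m) * (w n0 1 * F (l₁::lt) n0) else 0) =
            ∑' n1 : ℕ, (if 1 ≤ n0 ∧ 1 ≤ n1 ∧ n1 < n0 then
              (cn m n0 * ((n0:ℕ) : ℝ≥0∞)⁻¹) * ((w m k * F kt m) * (w n1 l₁ * F lt n1))
              else 0) := by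
          intro n0
          by_cases h0 : 1 ≤ n0
          · rw [if_pos ⟨hm, h0⟩]
            rw [show F (l₁::lt) n0 = ∑' n1 : ℕ, (if 1 ≤ n1 ∧ n1 < n0 then
              w n1 l₁ * F lt n1 else 0) from rfl, w_one]
            rw [show cn m n0 * (w m k * F kt m) * (((n0:ℕ) : ℝ≥0∞)⁻¹ *
                (∑' n1 : ℕ, (if 1 ≤ n1 ∧ n1 < n0 then w n1 l₁ * F lt n1 else 0))) =
              (cn m n0 * ((n0:ℕ) : ℝ≥0∞)⁻¹ * (w m k * F kt m)) *
                (∑' n1 : ℕ, (if 1 ≤ n1 ∧ n1 < n0 then w n1 l₁ * F lt n1 else 0)) by ring]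
            rw [← ENNReal.tsum_mul_left]
            refine tsum_congr fun n1 => ?_
            by_cases h1 : 1 ≤ n1 ∧ n1 < n0
            · rw [if_pos h1, if_pos ⟨h0, h1.1, h1.2⟩]; ring
            · rw [if_neg h1, if_neg (by tauto), mul_zero]
          · simp [h0, fun (h : 1 ≤ m ∧ 1 ≤ n0) => h0 h.2]
        rw [tsum_congr e1, ENNReal.tsum_comm]
        refine tsum_congr fun n1 => ?_
        have e2 : ∀ n0 : ℕ, (if 1 ≤ n0 ∧ 1 ≤ n1 ∧ n1 < n0 then
            (cn m n0 * ((n0:ℕ) : ℝ≥0∞)⁻¹) * ((w m k * F kt m) * (w n1 l₁ * F lt n1))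
            else 0) =
            (if n1 < n0 then cn m n0 * ((n0:ℕ) : ℝ≥0∞)⁻¹ else 0) *
              (if 1 ≤ n1 then (w m k * F kt m) * (w n1 l₁ * F lt n1) else 0) := by
          intro n0
          by_cases h1 : 1 ≤ n1
          · by_cases h0 : n1 < n0
            · rw [if_pos ⟨by omega, h1, h0⟩, if_pos h0, if_pos h1]
            · rw [if_neg (by tauto), if_neg h0, zero_mul]
          · rw [if_neg (by tauto), if_neg h1, mul_zero]
        rw [tsum_congr e2, ENNReal.tsum_mul_right, key m n1 hm]
        by_cases h1 : 1 ≤ n1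
        · rw [if_pos h1, if_pos ⟨hm, h1⟩, w_succ m k (by omega)]
          ring
        · rw [if_neg h1, if_neg (by tauto), mul_zero]
      · simp [hm]

lemma Z_symm (k l : List ℕ) : Z k l = Z l k := by
  match k, l with
  | [], [] => rfl
  | [], c :: t => rfl
  | c :: t, [] => rfl
  | k :: kt, l :: lt =>
      rw [show Z (k::kt) (l::lt) = ∑' m : ℕ, ∑' n : ℕ, (if 1 ≤ m ∧ 1 ≤ n then
        cn m n * (w m k * F kt m) * (w n l * F lt n) else 0) from rfl]
      rw [show Z (l::lt) (k::kt) = ∑' n : ℕ, ∑' m : ℕ, (if 1 ≤ n ∧ 1 ≤ m then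
        cn n m * (w n l * F lt n) * (w m k * F kt m) else 0) from rfl]
      rw [ENNReal.tsum_comm]
      refine tsum_congr fun n => tsum_congr fun m => ?_
      by_cases h : 1 ≤ m ∧ 1 ≤ n
      · rw [if_pos h, if_pos ⟨h.2, h.1⟩, cn_symm]
        ring
      · rw [if_neg h, if_neg (by tauto)]

/-- the duality process on index lists. -/
def D : List ℕ → List ℕ → List ℕ
  | [], l => l
  | 0 :: _, _ => []
  | 1 :: _, [] => []
  | 1 :: kt, c :: lt => D kt ((c+1) :: lt)
  | (k+2) :: kt, l => D ((k+1) :: kt) (1 :: l)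
  termination_by k _ => k.sum
  decreasing_by all_goals (first | (simp [List.sum_cons]; omega) | simp [List.sum_cons] | omega)

lemma Z_eq_D (k l : List ℕ) (hk : ∀ a ∈ k, 1 ≤ a) (h : 2 ≤ k.headI ∨ l ≠ []) :
    Z k l = zE (D k l) := by
  induction k, l using D.induct with
  | case1 l => rw [D]; rfl
  | case2 kt l => exact absurd (hk 0 (by simp)) (by omega)
  | case3 kt => simp at h
  | case4 kt c lt ih =>
      rw [D, Z_symm, ← T1 c lt kt, Z_symm]
      exact ih (fun a ha => hk a (List.mem_cons_of_mem _ ha)) (Or.inr (by simp))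
  | case5 k kt l ih =>
      rw [D, T1 (k+1) kt l]
      refine ih (fun a ha => ?_) (Or.inr (by simp))
      rcases List.mem_cons.mp ha with h1 | h1
      · omega
      · exact hk a (List.mem_cons.mpr (Or.inr h1))

/- ------------------- combinatorial part ------------------- -/

def Rlist (k : List ℕ) : List ℕ := (partialSums k).reverse.map fun a => k.sum + 1 - a

def Clist (k : List ℕ) : List ℕ :=
  ((List.range k.sum).map (· + 1)).filter fun m => m ∉ Rlist k

lemma dualSeq_eq (k : List ℕ) : dualSeq k = unPartial (Clist k) := rfl

lemma partialSums_cons (a : ℕ) (t : List ℕ) :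
    partialSums (a :: t) = a :: (partialSums t).map (a + ·) := by
  rw [partialSums, List.length_cons, List.range_succ_eq_map, List.map_cons,
    List.map_map, partialSums, List.map_map]
  congr 1

lemma mem_partialSums_le (t : List ℕ) (x : ℕ) (hx : x ∈ partialSums t) : x ≤ t.sum := by
  rw [partialSums] at hx
  obtain ⟨i, _, rfl⟩ := List.mem_map.mp hx
  conv_rhs => rw [← List.sum_take_add_sum_drop t (i+1)]
  omega

lemma mem_partialSums_pos (t : List ℕ) (ht : ∀ a ∈ t, 1 ≤ a) (x : ℕ)
    (hx : x ∈ partialSums t) : 1 ≤ x := by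
  rw [partialSums] at hx
  obtain ⟨i, hi, rfl⟩ := List.mem_map.mp hx
  cases t with
  | nil => simp at hi
  | cons b t' =>
      rw [List.take_succ_cons, List.sum_cons]
      have := ht b (by simp)
      omega

lemma mem_Rlist (t : List ℕ) (ht : ∀ a ∈ t, 1 ≤ a) (x : ℕ) (hx : x ∈ Rlist t) :
    1 ≤ x ∧ x ≤ t.sum := by
  rw [Rlist] at hx
  obtain ⟨p, hp, rfl⟩ := List.mem_map.mp hx
  rw [List.mem_reverse] at hp
  have h1 := mem_partialSums_le t p hp
  have h2 := mem_partialSums_pos t ht p hp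
  omega

lemma Rlist_cons (a : ℕ) (t : List ℕ) :
    Rlist ((a+1) :: t) = Rlist t ++ [t.sum + 1] := by
  rw [Rlist, partialSums_cons, List.reverse_cons, List.map_append]
  congr 1
  · rw [← List.map_reverse, List.map_map, Rlist]
    refine List.map_congr_left fun p _ => ?_
    simp only [Function.comp_apply, List.sum_cons]
    omega
  · simp only [List.map_cons, List.map_nil, List.sum_cons]
    congr 1
    omega

lemma Clist_eq (t : List ℕ) :
    Clist t = (List.range' 1 t.sum).filter fun m => m ∉ Rlist t := by
  rw [Clist]
  congr 1
  rw [List.range_eq_range']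
  have h := List.map_add_range' (a := 1) 0 t.sum 1
  rw [show (1:ℕ) + 0 = 1 from rfl] at h
  rw [← h]
  exact List.map_congr_left fun p _ => by omega

lemma Clist_cons (a : ℕ) (t : List ℕ) (ht : ∀ b ∈ t, 1 ≤ b) :
    Clist ((a+1) :: t) = Clist t ++ List.range' (t.sum + 2) a := by
  rw [Clist_eq, Clist_eq]
  have hsum : ((a+1) :: t).sum = (t.sum + 1) + a := by simp [List.sum_cons]; omega
  rw [hsum]
  have hap := List.range'_append (s := 1) (m := t.sum+1) (n := a) (step := 1)
  simp only [one_mul] at hap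
  rw [← hap,
    show 1 + (t.sum + 1) = t.sum + 2 by omega, List.filter_append]
  have hmem : ∀ x : ℕ, x ∈ Rlist ((a+1) :: t) ↔ x ∈ Rlist t ∨ x = t.sum + 1 := by
    intro x
    rw [Rlist_cons]
    simp
  congr 1
  · have h1 := List.range'_concat (step := 1) (s := 1) (n := t.sum)
    simp only [one_mul] at h1
    rw [h1, List.filter_append]
    have h2 : List.filter (fun m => decide (m ∉ Rlist ((a+1) :: t))) [1 + t.sum] = [] := by
      have hin : (1+t.sum) ∈ Rlist ((a+1) :: t) := (hmem _).mpr (Or.inr (by omega))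
      simp [List.filter_cons, hin]
    rw [h2, List.append_nil]
    refine List.filter_congr fun x hx => ?_
    rw [List.mem_range'_1] at hx
    simp [decide_eq_decide, hmem, show x ≠ t.sum + 1 by omega]
  · rw [List.filter_eq_self]
    intro x hx
    rw [List.mem_range'_1] at hx
    simp only [decide_eq_true_eq]
    rw [hmem]
    push_neg
    refine ⟨fun hc => ?_, by omega⟩
    have := mem_Rlist t ht x hc
    omega

lemma unPartial_partialSums (l : List ℕ) : unPartial (partialSums l) = l := by
  induction l with
  | nil => rfl
  | cons a t ih =>
      rw [partialSums_cons, unPartial, List.zipWith_cons_cons]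
      congr 1
      · have hX : a :: (partialSums t).map (a + ·) = ((0 :: partialSums t).map (a + ·)) := by
          simp
        rw [hX, List.zipWith_map]
        simp only [Nat.add_sub_add_left]
        rw [unPartial] at ih
        exact ih

lemma map_shift (s c : ℕ) (u : List ℕ) :
    List.map (s + ·) (List.map (c + ·) u) = List.map ((s+c) + ·) u := by
  rw [List.map_map]
  exact List.map_congr_left fun x _ => by simp [Function.comp]; omega

lemma D_eq (k l : List ℕ) (hk : ∀ a ∈ k, 1 ≤ a) (h : 2 ≤ k.headI ∨ l ≠ []) :
    D k l = unPartial (Clist k ++ (partialSums l).map (k.sum + ·)) := by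
  induction k, l using D.induct with
  | case1 l =>
      rw [D]
      have h0 : Clist ([] : List ℕ) = [] := rfl
      have h1 : ([] : List ℕ).sum = 0 := rfl
      rw [h0, h1, List.nil_append]
      have h2 : (partialSums l).map ((0:ℕ) + ·) = partialSums l := by
        simp
      rw [h2, unPartial_partialSums]
  | case2 kt l => exact absurd (hk 0 (by simp)) (by omega)
  | case3 kt => simp at h
  | case4 kt c lt ih =>
      have ht : ∀ b ∈ kt, 1 ≤ b := fun b hb => hk b (List.mem_cons_of_mem _ hb)
      rw [D, ih ht (Or.inr (by simp))]
      refine congrArg unPartial ?_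
      have e0 : Clist (1 :: kt) = Clist kt := by
        have := Clist_cons 0 kt ht
        simpa using this
      rw [e0, partialSums_cons, partialSums_cons, List.map_cons, List.map_cons,
        map_shift, map_shift]
      congr 2
      · simp only [List.sum_cons]
        omega
      · refine List.map_congr_left fun x _ => ?_
        simp only [List.sum_cons]
        omega
  | case5 a kt l ih =>
      have ht : ∀ b ∈ kt, 1 ≤ b := fun b hb => hk b (List.mem_cons_of_mem _ hb)
      rw [D, ih (by
        intro b hb
        rcases List.mem_cons.mp hb with h1 | h1
        · omega
        · exact ht b h1) (Or.inr (by simp))]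
      refine congrArg unPartial ?_
      simp only [Nat.succ_eq_add_one]
      rw [Clist_cons a kt ht, show a+1+1 = (a+1)+1 from rfl, Clist_cons (a+1) kt ht,
        partialSums_cons, List.map_cons, map_shift,
        List.range'_concat (step := 1) (s := kt.sum+2) (n := a)]
      simp only [one_mul, List.append_assoc, List.singleton_append, List.cons_append,
        List.sum_cons, List.nil_append]
      congr 3
      · omega
      · refine List.map_congr_left fun x _ => ?_
        omega

end
end MzvDuality

/-- **Duality of multiple zeta values.**  For every admissible sequence `s`,
`ζ(s) = ζ(τ(s))` where `τ(s)` is the dual sequence. -/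
theorem mzv_duality (s : List ℕ)
    (hpos : ∀ a ∈ s, 1 ≤ a) (hadm : ∃ a t, s = a :: t ∧ 2 ≤ a) :
    mzv s = mzv (dualSeq s) := by
  classical
  obtain ⟨a, t, rfl, ha⟩ := hadm
  have hhead : 2 ≤ (a :: t).headI ∨ ([] : List ℕ) ≠ [] := Or.inl (by simpa using ha)
  have h1 : mzv (a :: t) = (MzvDuality.zE (a :: t)).toReal := by
    rw [MzvDuality.mzv_eq, MzvDuality.zE_eq]
  have h2 : mzv (dualSeq (a :: t)) = (MzvDuality.zE (dualSeq (a :: t))).toReal := by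
    rw [MzvDuality.mzv_eq, MzvDuality.zE_eq]
  rw [h1, h2]
  congr 1
  have h3 : MzvDuality.zE (a :: t) = MzvDuality.Z (a :: t) [] := rfl
  rw [h3, MzvDuality.Z_eq_D _ _ hpos hhead]
  congr 1
  rw [MzvDuality.D_eq _ _ hpos hhead, MzvDuality.dualSeq_eq]
  refine congrArg unPartial ?_
  simp [partialSums]
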